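/- For any i ∈ 𝕀, the number D_i of fixed points x of std(G) with G_x = i has the same distribution as min(X, n), where X is a random variable with distribution Geo_0(1 − p_i); equivalently, P(D_i ≥ l) = p_i^l for every 0 ≤ l ≤ n and D_i ≤ n almost surely. -/

import Mathlib

open MeasureTheory ProbabilityTheory
open scoped ENNReal


open Finset

private lemma fin3_cases (v : Fin 3) : v = 0 ∨ v = 1 ∨ v = 2 := by fin_cases v <;> decide

/-- count of `2`s (values `> i`) strictly before position `a` -/
private def upc (n : ℕ) (t : ℕ → Fin 3) (a : ℕ) : ℕ :=
  ((range (min a n)).filter fun y => t y = 2).card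

/-- count of `0`s (values `< i`) at positions `≥ a` -/
private def loc (n : ℕ) (t : ℕ → Fin 3) (a : ℕ) : ℕ :=
  ((Finset.Ico a n).filter fun y => t y = 0).card

private def phi (n : ℕ) (t : ℕ → Fin 3) (a : ℕ) : ℤ := (upc n t a : ℤ) - loc n t a

private def fixF (n : ℕ) (t : ℕ → Fin 3) : Finset ℕ :=
  (range n).filter fun b => t b = 1 ∧ phi n t b = 0

private lemma mem_fixF {n : ℕ} {t : ℕ → Fin 3} {b : ℕ} :
    b ∈ fixF n t ↔ b < n ∧ t b = 1 ∧ phi n t b = 0 := by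
  simp [fixF]

private lemma upc_mono {n : ℕ} {t : ℕ → Fin 3} {a b : ℕ} (h : a ≤ b) :
    upc n t a ≤ upc n t b := by
  apply Finset.card_le_card
  apply Finset.filter_subset_filter
  exact Finset.range_subset_range.2 (by omega)

private lemma loc_anti {n : ℕ} {t : ℕ → Fin 3} {a b : ℕ} (h : a ≤ b) :
    loc n t b ≤ loc n t a := by
  apply Finset.card_le_card
  apply Finset.filter_subset_filter
  apply Finset.Ico_subset_Ico (by omega) le_rfl

private lemma phi_mono {n : ℕ} {t : ℕ → Fin 3} {a b : ℕ} (h : a ≤ b) :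
    phi n t a ≤ phi n t b := by
  have h1 := upc_mono (n := n) (t := t) h
  have h2 := loc_anti (n := n) (t := t) h
  unfold phi; omega

private lemma phi_zero_le {n : ℕ} {t : ℕ → Fin 3} : phi n t 0 ≤ 0 := by
  have : upc n t 0 = 0 := by simp [upc]
  unfold phi; omega

private lemma phi_ge_nonneg {n : ℕ} {t : ℕ → Fin 3} {a : ℕ} (h : n ≤ a) :
    0 ≤ phi n t a := by
  have : loc n t a = 0 := by
    have he : Finset.Ico a n = ∅ := Finset.Ico_eq_empty (by omega)
    simp [loc, he]
  unfold phi; omega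

private lemma upc_step {n : ℕ} {t : ℕ → Fin 3} {a : ℕ} (ha : a < n) :
    upc n t (a + 1) = upc n t a + (if t a = 2 then 1 else 0) := by
  have h1 : min (a+1) n = a + 1 := by omega
  have h2 : min a n = a := by omega
  unfold upc
  rw [h1, h2, Finset.range_add_one, Finset.filter_insert]
  split_ifs with h
  · rw [Finset.card_insert_of_notMem (by simp)]
  · simp

private lemma loc_step {n : ℕ} {t : ℕ → Fin 3} {a : ℕ} (ha : a < n) :
    loc n t a = loc n t (a + 1) + (if t a = 0 then 1 else 0) := by
  unfold loc
  rw [← Finset.insert_Ico_add_one_left_eq_Ico (by omega), Finset.filter_insert]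
  split_ifs with h
  · rw [Finset.card_insert_of_notMem (by simp)]
  · simp

private lemma phi_step {n : ℕ} {t : ℕ → Fin 3} {a : ℕ} (ha : a < n) :
    phi n t (a + 1) = phi n t a + (if t a = 1 then 0 else 1) := by
  have h1 := upc_step (t := t) ha
  have h2 := loc_step (t := t) ha
  rcases fin3_cases (t a) with h | h | h <;> simp [h] at h1 h2 ⊢ <;> unfold phi <;> omega

/-- if `t` is `1` on `[a, a+l)` then `loc` doesn't change across the run -/
private lemma loc_run {n l : ℕ} {t : ℕ → Fin 3} {a : ℕ} (h : ∀ j < l, t (a + j) = 1) :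
    loc n t a = loc n t (a + l) := by
  unfold loc
  congr 1
  apply Finset.ext
  intro y
  simp only [Finset.mem_filter, Finset.mem_Ico]
  constructor
  · rintro ⟨⟨h1, h2⟩, h3⟩
    refine ⟨⟨?_, h2⟩, h3⟩
    by_contra hc
    have := h (y - a) (by omega)
    rw [show a + (y - a) = y by omega] at this
    rw [this] at h3
    exact absurd h3 (by decide)
  · rintro ⟨⟨h1, h2⟩, h3⟩
    exact ⟨⟨by omega, h2⟩, h3⟩

/-- run condition at `a` -/
private def Run (n l : ℕ) (t : ℕ → Fin 3) (a : ℕ) : Prop :=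
  (∀ j < l, t (a + j) = 1) ∧ upc n t a = loc n t (a + l) ∧ (a = 0 ∨ t (a - 1) ≠ 1)

private lemma phi_eq_zero_of_run {n l : ℕ} {t : ℕ → Fin 3} {a : ℕ}
    (hr : Run n l t a) : phi n t a = 0 := by
  obtain ⟨h1, h2, _⟩ := hr
  have := loc_run (n := n) h1
  unfold phi; omega

private lemma run_mem_fixF {n l : ℕ} {t : ℕ → Fin 3} {a : ℕ} (hl : 1 ≤ l)
    (hn : a + l ≤ n) (hr : Run n l t a) : ∀ j < l, a + j ∈ fixF n t := by
  have h0 := phi_eq_zero_of_run hr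
  intro j hj
  -- phi (a+j) = 0 by induction
  have key : ∀ k ≤ l, phi n t (a + k) = 0 := by
    intro k hk
    induction k with
    | zero => simpa using h0
    | succ k ih =>
      have hk' : phi n t (a + k) = 0 := ih (by omega)
      have := phi_step (n := n) (t := t) (a := a + k) (by omega)
      rw [hr.1 k (by omega)] at this
      simp at this
      rw [show a + (k+1) = a + k + 1 by omega, this, hk']
  exact mem_fixF.2 ⟨by omega, hr.1 j hj, key j (by omega)⟩

private lemma card_le_of_run {n l : ℕ} {t : ℕ → Fin 3} {a : ℕ} (hl : 1 ≤ l)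
    (hn : a + l ≤ n) (hr : Run n l t a) : l ≤ (fixF n t).card := by
  have := run_mem_fixF hl hn hr
  calc l = (Finset.range l).card := by simp
  _ ≤ (fixF n t).card := by
      apply Finset.card_le_card_of_injOn (fun j => a + j)
      · intro j hj; exact this j (Finset.mem_range.1 hj)
      · intro x _ y _ h; have : a + x = a + y := h; omega

private lemma run_of_card_le {n l : ℕ} {t : ℕ → Fin 3} (hl : 1 ≤ l) (hln : l ≤ n)
    (hc : l ≤ (fixF n t).card) : ∃ a, a + l ≤ n ∧ Run n l t a := by
  have hne : (fixF n t).Nonempty := Finset.card_pos.1 (by omega)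
  set a := (fixF n t).min' hne with ha
  have hamem : a ∈ fixF n t := Finset.min'_mem _ _
  have hales : ∀ x ∈ fixF n t, a ≤ x := fun x hx => Finset.min'_le _ _ hx
  -- interval property
  have hint : ∀ x ∈ fixF n t, ∀ y, a ≤ y → y ≤ x → y ∈ fixF n t := by
    intro x hx y hay hyx
    rw [mem_fixF] at hx hamem ⊢
    have hyn : y < n := by omega
    have hphiy : phi n t y = 0 := by
      have h1 := phi_mono (n := n) (t := t) hay
      have h2 := phi_mono (n := n) (t := t) hyx
      omega
    refine ⟨hyn, ?_, hphiy⟩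
    rcases eq_or_lt_of_le hyx with rfl | hlt
    · exact hx.2.1
    · have hstep := phi_step (n := n) (t := t) (a := y) hyn
      have h2 := phi_mono (n := n) (t := t) (show y + 1 ≤ x by omega)
      split_ifs at hstep with h
      · exact h
      · omega
  -- there is an element ≥ a + (l-1)
  have hx0 : ∃ x ∈ fixF n t, a + (l - 1) ≤ x := by
    by_contra hc'
    push_neg at hc'
    have hsub : fixF n t ⊆ Finset.Ico a (a + (l - 1)) := by
      intro x hx
      exact Finset.mem_Ico.2 ⟨hales x hx, hc' x hx⟩
    have := Finset.card_le_card hsub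
    rw [Nat.card_Ico] at this
    omega
  obtain ⟨x0, hx0m, hx0⟩ := hx0
  have hal : a + (l - 1) ∈ fixF n t := hint x0 hx0m _ (by omega) hx0
  have haln : a + (l - 1) < n := (mem_fixF.1 hal).1
  refine ⟨a, by omega, ?_, ?_, ?_⟩
  · intro j hj
    exact (mem_fixF.1 (hint x0 hx0m (a + j) (by omega) (by omega))).2.1
  · have h0 : phi n t a = 0 := (mem_fixF.1 hamem).2.2
    have hrun : ∀ j < l, t (a + j) = 1 := fun j hj =>
      (mem_fixF.1 (hint x0 hx0m (a + j) (by omega) (by omega))).2.1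
    have := loc_run (n := n) hrun
    unfold phi at h0; omega
  · by_contra hc'
    push_neg at hc'
    obtain ⟨ha0, ha1⟩ := hc'
    have han : a - 1 < n := by omega
    have hstep := phi_step (n := n) (t := t) (a := a - 1) han
    rw [ha1] at hstep
    simp at hstep
    rw [show a - 1 + 1 = a by omega] at hstep
    have h0 : phi n t a = 0 := (mem_fixF.1 hamem).2.2
    have : a - 1 ∈ fixF n t := mem_fixF.2 ⟨han, ha1, by omega⟩
    have := hales _ this
    omega

private lemma run_unique {n l : ℕ} {t : ℕ → Fin 3} {a a' : ℕ} (hl : 1 ≤ l)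
    (hn : a + l ≤ n) (hn' : a' + l ≤ n) (hr : Run n l t a) (hr' : Run n l t a') :
    a = a' := by
  by_contra hne
  wlog hlt : a < a' generalizing a a'
  · exact this hn' hn hr' hr (Ne.symm hne) (by omega)
  have h0 := phi_eq_zero_of_run hr
  have h0' := phi_eq_zero_of_run hr'
  have ht : t (a' - 1) ≠ 1 := by
    rcases hr'.2.2 with h | h
    · omega
    · exact h
  have hstep := phi_step (n := n) (t := t) (a := a' - 1) (by omega)
  rw [if_neg ht] at hstep
  rw [show a' - 1 + 1 = a' by omega] at hstep
  have := phi_mono (n := n) (t := t) (show a ≤ a' - 1 by omega)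
  omega

/-- Partition property: unique `a ≤ m` with `upc = loc` and boundary condition. -/
private def Good (m : ℕ) (t : ℕ → Fin 3) (a : ℕ) : Prop :=
  upc m t a = loc m t a ∧ (a = 0 ∨ t (a - 1) ≠ 1)

private lemma good_exists (m : ℕ) (t : ℕ → Fin 3) : ∃ a ≤ m, Good m t a := by
  have hP : 0 ≤ phi m t m := phi_ge_nonneg le_rfl
  have hex : ∃ a, 0 ≤ phi m t a := ⟨m, hP⟩
  classical
  set a := Nat.find hex with ha
  have hfind : 0 ≤ phi m t a := Nat.find_spec hex
  have ham : a ≤ m := Nat.find_min' hex hP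
  rcases Nat.eq_zero_or_pos a with h0 | hpos
  · refine ⟨0, by omega, ?_, Or.inl rfl⟩
    have := phi_zero_le (n := m) (t := t)
    rw [h0] at hfind
    unfold phi at hfind this; omega
  · have hprev : ¬ 0 ≤ phi m t (a - 1) := Nat.find_min hex (by omega)
    push_neg at hprev
    have han : a - 1 < m := by
      by_contra hc
      have := phi_ge_nonneg (n := m) (t := t) (a := a - 1) (by omega)
      omega
    have hstep := phi_step (n := m) (t := t) (a := a - 1) han
    rw [show a - 1 + 1 = a by omega] at hstep
    have ht : t (a - 1) ≠ 1 := by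
      intro h
      rw [if_pos h] at hstep
      omega
    rw [if_neg ht] at hstep
    refine ⟨a, ham, ?_, Or.inr ht⟩
    unfold phi at hstep hfind hprev; omega

private lemma good_unique {m : ℕ} {t : ℕ → Fin 3} {a a' : ℕ} (ha : a ≤ m) (ha' : a' ≤ m)
    (hg : Good m t a) (hg' : Good m t a') : a = a' := by
  by_contra hne
  wlog hlt : a < a' generalizing a a'
  · exact this ha' ha hg' hg (Ne.symm hne) (by omega)
  have hg1 := hg.1
  have hg1' := hg'.1
  have h0 : phi m t a = 0 := by unfold phi; omega
  have h0' : phi m t a' = 0 := by unfold phi; omega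
  have ht : t (a' - 1) ≠ 1 := by
    rcases hg'.2 with h | h
    · omega
    · exact h
  have hstep := phi_step (n := m) (t := t) (a := a' - 1) (by omega)
  rw [if_neg ht, show a' - 1 + 1 = a' by omega] at hstep
  have := phi_mono (n := m) (t := t) (show a ≤ a' - 1 by omega)
  omega
open Finset

section Bridge
variable {n : ℕ}

private noncomputable def sgn (i r : ℝ) : Fin 3 := if r < i then 0 else if r = i then 1 else 2

private lemma sgn_eq_zero_iff {i r : ℝ} : sgn i r = 0 ↔ r < i := by
  unfold sgn
  split_ifs with h1 h2
  · simp [h1]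
  · constructor
    · intro h; exact absurd h (by decide)
    · intro h; exact absurd h h1
  · constructor
    · intro h; exact absurd h (by decide)
    · intro h; exact absurd h h1

private lemma sgn_eq_one_iff {i r : ℝ} : sgn i r = 1 ↔ r = i := by
  unfold sgn
  split_ifs with h1 h2
  · constructor
    · intro h; exact absurd h (by decide)
    · intro h; exact absurd (h ▸ h1) (lt_irrefl i)
  · simp [h2]
  · constructor
    · intro h; exact absurd h (by decide)
    · intro h; exact absurd h h2

private lemma sgn_eq_two_iff {i r : ℝ} : sgn i r = 2 ↔ i < r := by
  unfold sgn
  split_ifs with h1 h2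
  · constructor
    · intro h; exact absurd h (by decide)
    · intro h; exact absurd (lt_trans h h1) (lt_irrefl i)
  · constructor
    · intro h; exact absurd h (by decide)
    · intro h; exact absurd (h2 ▸ h) (lt_irrefl i)
  · simp
    rcases lt_trichotomy r i with h | h | h
    · exact absurd h h1
    · exact absurd h h2
    · exact h

private lemma measurable_sgn (i : ℝ) : Measurable (sgn i) := by
  unfold sgn
  apply Measurable.ite (measurableSet_lt measurable_id measurable_const) measurable_const
  apply Measurable.ite _ measurable_const measurable_const
  exact measurableSet_eq_fun measurable_id measurable_const

/-- extend a vector on `Fin n` to `ℕ` -/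
private def extF (n : ℕ) (v : Fin n → Fin 3) : ℕ → Fin 3 :=
  fun b => if hb : b < n then v ⟨b, hb⟩ else 0

private lemma extF_coe (v : Fin n → Fin 3) (y : Fin n) : extF n v (y : ℕ) = v y := by
  unfold extF
  rw [dif_pos y.isLt]

private lemma card_fin_nat (n : ℕ) (p : ℕ → Prop) [DecidablePred p] :
    (Finset.univ.filter fun y : Fin n => p (y : ℕ)).card = ((range n).filter p).card := by
  rw [Finset.card_filter, Finset.card_filter]
  exact Fin.sum_univ_eq_sum_range (fun j => if p j then 1 else 0) n

private lemma card_lt_eq (c : Fin n) :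
    (Finset.univ.filter fun z : Fin n => z < c).card = (c : ℕ) := by
  have h1 : (Finset.univ.filter fun z : Fin n => z < c) =
      (Finset.univ.filter fun z : Fin n => (z : ℕ) < (c : ℕ)) := by
    apply Finset.filter_congr; intro z _; exact Fin.lt_def
  rw [h1, card_fin_nat n (fun b => b < (c : ℕ))]
  have h2 : (range n).filter (fun b => b < (c : ℕ)) = range (c : ℕ) := by
    ext b
    simp only [Finset.mem_filter, Finset.mem_range]
    have := c.isLt
    omega
  rw [h2, Finset.card_range]

private lemma card_filter_split (p q : Fin n → Prop) [DecidablePred p] [DecidablePred q] :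
    (Finset.univ.filter p).card =
      (Finset.univ.filter fun y => p y ∧ q y).card +
      (Finset.univ.filter fun y => p y ∧ ¬ q y).card := by
  rw [← Finset.filter_filter, ← Finset.filter_filter,
    ← Finset.card_union_of_disjoint (Finset.disjoint_filter_filter_not _ _ _),
    Finset.filter_union_filter_not_eq]

private lemma rank_eq (σ : Equiv.Perm (Fin n)) (p : Fin n → Prop) [DecidablePred p]
    (x : Fin n) (h : ∀ y, p y ↔ σ y < σ x) :
    (Finset.univ.filter p).card = (σ x : ℕ) := by
  have h1 : Finset.univ.filter p = Finset.univ.filter (fun y => σ y < σ x) :=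
    Finset.filter_congr (fun y _ => by simpa using h y)
  rw [h1, ← card_lt_eq (σ x)]
  apply Finset.card_bij (fun y _ => σ y)
  · intro y hy
    simp only [Finset.mem_filter, Finset.mem_univ, true_and] at hy ⊢
    exact hy
  · intro y _ z _ hyz
    exact σ.injective hyz
  · intro z hz
    simp only [Finset.mem_filter, Finset.mem_univ, true_and] at hz ⊢
    exact ⟨σ.symm z, by simpa using hz, σ.apply_symm_apply z⟩
end Bridge

section Bridge2
variable {n : ℕ}

private lemma main_count_iff (std : (Fin n → ℝ) → Equiv.Perm (Fin n))
    (hstd : ∀ (g : Fin n → ℝ) (j k : Fin n),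
      std g j < std g k ↔ (g j < g k ∨ (g j = g k ∧ j < k)))
    (g : Fin n → ℝ) (i : ℝ) (x : Fin n) (hgx : g x = i) :
    phi n (extF n (fun y => sgn i (g y))) (x : ℕ) = 0 ↔ std g x = x := by
  classical
  set t : ℕ → Fin 3 := extF n (fun y => sgn i (g y)) with htdef
  have ht : ∀ y : Fin n, t (y : ℕ) = sgn i (g y) := fun y => extF_coe _ y
  set cR := (Finset.univ.filter fun y : Fin n => g y < g x ∨ (g y = g x ∧ y < x)).card with hcR
  have hrank : cR = ((std g x : Fin n) : ℕ) := rank_eq (std g) _ x (fun y => (hstd g y x).symm)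
  have hiff : std g x = x ↔ cR = (x : ℕ) := by
    rw [hrank]
    exact ⟨fun h => by rw [h], fun h => Fin.val_injective h⟩
  set cA := (Finset.univ.filter fun y : Fin n => g y < i).card with hcA
  set cB := (Finset.univ.filter fun y : Fin n => y < x ∧ g y = i).card with hcB
  set cS1 := (Finset.univ.filter fun y : Fin n => y < x ∧ g y < i).card with hcS1
  set cS3 := (Finset.univ.filter fun y : Fin n => y < x ∧ i < g y).card with hcS3
  set cD := (Finset.univ.filter fun y : Fin n => x < y ∧ g y < i).card with hcD
  have hR : cR = cA + cB := by
    have e0 : (Finset.univ.filter fun y : Fin n => g y < g x ∨ (g y = g x ∧ y < x)) =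
        (Finset.univ.filter fun y : Fin n => g y < i ∨ (y < x ∧ g y = i)) := by
      apply Finset.filter_congr
      intro y _
      rw [hgx]
      constructor
      · rintro (h | ⟨h1, h2⟩)
        · exact Or.inl h
        · exact Or.inr ⟨h2, h1⟩
      · rintro (h | ⟨h1, h2⟩)
        · exact Or.inl h
        · exact Or.inr ⟨h2, h1⟩
    rw [hcR, e0, Finset.filter_or, Finset.card_union_of_disjoint]
    rw [Finset.disjoint_left]
    rintro y hy1 hy2
    simp only [Finset.mem_filter, Finset.mem_univ, true_and] at hy1 hy2
    rw [hy2.2] at hy1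
    exact lt_irrefl i hy1
  have hxv : (x : ℕ) = cS1 + cB + cS3 := by
    have h0 := (card_lt_eq x).symm
    rw [card_filter_split (fun y : Fin n => y < x) (fun y => g y < i)] at h0
    rw [card_filter_split (fun y : Fin n => y < x ∧ ¬ g y < i) (fun y => g y = i)] at h0
    have e1 : (Finset.univ.filter fun y : Fin n => (y < x ∧ ¬ g y < i) ∧ g y = i) =
        (Finset.univ.filter fun y : Fin n => y < x ∧ g y = i) := by
      apply Finset.filter_congr
      intro y _
      constructor
      · rintro ⟨⟨h1, _⟩, h3⟩; exact ⟨h1, h3⟩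
      · rintro ⟨h1, h3⟩; exact ⟨⟨h1, by rw [h3]; exact lt_irrefl i⟩, h3⟩
    have e2 : (Finset.univ.filter fun y : Fin n => (y < x ∧ ¬ g y < i) ∧ ¬ g y = i) =
        (Finset.univ.filter fun y : Fin n => y < x ∧ i < g y) := by
      apply Finset.filter_congr
      intro y _
      constructor
      · rintro ⟨⟨h1, h2⟩, h3⟩
        exact ⟨h1, lt_of_le_of_ne (not_lt.1 h2) (Ne.symm h3)⟩
      · rintro ⟨h1, h2⟩
        exact ⟨⟨h1, not_lt.2 (le_of_lt h2)⟩, fun hc => absurd (hc ▸ h2) (lt_irrefl i)⟩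
    rw [e1, e2] at h0
    omega
  have hA : cA = cS1 + cD := by
    have h0 := card_filter_split (fun y : Fin n => g y < i) (fun y => y < x)
    have e1 : (Finset.univ.filter fun y : Fin n => g y < i ∧ y < x) =
        (Finset.univ.filter fun y : Fin n => y < x ∧ g y < i) := by
      apply Finset.filter_congr; intro y _; exact and_comm
    have e2 : (Finset.univ.filter fun y : Fin n => g y < i ∧ ¬ y < x) =
        (Finset.univ.filter fun y : Fin n => x < y ∧ g y < i) := by
      apply Finset.filter_congr
      intro y _
      constructor
      · rintro ⟨h1, h2⟩
        have hyx : y ≠ x := by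
          intro hc; rw [hc, hgx] at h1; exact lt_irrefl i h1
        exact ⟨lt_of_le_of_ne (not_lt.1 h2) (Ne.symm hyx), h1⟩
      · rintro ⟨h1, h2⟩
        exact ⟨h2, not_lt.2 (le_of_lt h1)⟩
    rw [e1, e2] at h0
    omega
  have hupc : upc n t (x : ℕ) = cS3 := by
    have e1 : (Finset.univ.filter fun y : Fin n => y < x ∧ i < g y) =
        (Finset.univ.filter fun y : Fin n => ((y : ℕ) < (x : ℕ) ∧ t (y : ℕ) = 2)) := by
      apply Finset.filter_congr
      intro y _
      rw [ht y, sgn_eq_two_iff]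
      exact and_congr_left (fun _ => Fin.lt_def)
    rw [hcS3, e1, card_fin_nat n (fun b => b < (x : ℕ) ∧ t b = 2)]
    unfold upc
    congr 1
    ext b
    simp only [Finset.mem_filter, Finset.mem_range]
    have := x.isLt
    constructor
    · rintro ⟨h1, h2⟩; exact ⟨by omega, by omega, h2⟩
    · rintro ⟨h1, h2, h3⟩; exact ⟨by omega, h3⟩
  have hloc : loc n t ((x : ℕ) + 1) = cD := by
    have e1 : (Finset.univ.filter fun y : Fin n => x < y ∧ g y < i) =
        (Finset.univ.filter fun y : Fin n => ((x : ℕ) < (y : ℕ) ∧ t (y : ℕ) = 0)) := by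
      apply Finset.filter_congr
      intro y _
      rw [ht y, sgn_eq_zero_iff]
      exact and_congr_left (fun _ => Fin.lt_def)
    rw [hcD, e1, card_fin_nat n (fun b => (x : ℕ) < b ∧ t b = 0)]
    unfold loc
    congr 1
    ext b
    simp only [Finset.mem_filter, Finset.mem_range, Finset.mem_Ico]
    constructor
    · rintro ⟨⟨h1, h2⟩, h3⟩; exact ⟨by omega, by omega, h3⟩
    · rintro ⟨h1, h2, h3⟩; exact ⟨⟨by omega, by omega⟩, h3⟩
  have hlocstep : loc n t (x : ℕ) = loc n t ((x : ℕ) + 1) := by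
    have h1t : t (x : ℕ) = 1 := by rw [ht x, hgx]; exact sgn_eq_one_iff.2 rfl
    have hs := loc_step (n := n) (t := t) (a := (x : ℕ)) x.isLt
    rw [h1t, if_neg (show (1 : Fin 3) ≠ 0 by decide)] at hs
    omega
  rw [hiff]
  unfold phi
  omega

private lemma bridge (std : (Fin n → ℝ) → Equiv.Perm (Fin n))
    (hstd : ∀ (g : Fin n → ℝ) (j k : Fin n),
      std g j < std g k ↔ (g j < g k ∨ (g j = g k ∧ j < k)))
    (g : Fin n → ℝ) (i : ℝ) (x : Fin n) :
    (std g x = x ∧ g x = i) ↔ ((x : ℕ) ∈ fixF n (extF n (fun y => sgn i (g y)))) := by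
  classical
  have ht1 : extF n (fun y => sgn i (g y)) (x : ℕ) = 1 ↔ g x = i := by
    rw [extF_coe, sgn_eq_one_iff]
  rw [mem_fixF]
  constructor
  · rintro ⟨hfix, hgx⟩
    exact ⟨x.isLt, ht1.2 hgx, (main_count_iff std hstd g i x hgx).2 hfix⟩
  · rintro ⟨_, h1, h0⟩
    have hgx : g x = i := ht1.1 h1
    exact ⟨(main_count_iff std hstd g i x hgx).1 h0, hgx⟩

private lemma ncard_eq_fix (std : (Fin n → ℝ) → Equiv.Perm (Fin n))
    (hstd : ∀ (g : Fin n → ℝ) (j k : Fin n),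
      std g j < std g k ↔ (g j < g k ∨ (g j = g k ∧ j < k)))
    (g : Fin n → ℝ) (i : ℝ) :
    {x : Fin n | std g x = x ∧ g x = i}.ncard
      = (fixF n (extF n (fun y => sgn i (g y)))).card := by
  classical
  have hset : {x : Fin n | std g x = x ∧ g x = i} =
      ↑(Finset.univ.filter fun x : Fin n => std g x = x ∧ g x = i) := by
    ext x; simp
  rw [hset, Set.ncard_coe_finset]
  have e1 : (Finset.univ.filter fun x : Fin n => std g x = x ∧ g x = i) =
      (Finset.univ.filter fun x : Fin n =>
        (x : ℕ) ∈ fixF n (extF n (fun y => sgn i (g y)))) :=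
    Finset.filter_congr (fun x _ => bridge std hstd g i x)
  rw [e1, card_fin_nat n (fun b => b ∈ fixF n (extF n (fun y => sgn i (g y))))]
  congr 1
  rw [Finset.filter_mem_eq_inter]
  apply Finset.inter_eq_right.2
  intro b hb
  exact Finset.mem_range.2 (mem_fixF.1 hb).1
end Bridge2

section MeasurePart
open MeasureTheory

private lemma measurableSet_all {α : Type*} [Fintype α] (S : Set (α → Fin 3)) :
    MeasurableSet S := by
  have hsing : ∀ v : α → Fin 3, MeasurableSet ({v} : Set (α → Fin 3)) := by
    intro v
    have h : ({v} : Set (α → Fin 3)) = ⋂ x, (fun w : α → Fin 3 => w x) ⁻¹' {v x} := by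
      ext w
      simp [funext_iff, Set.mem_iInter, eq_comm]
    rw [h]
    exact MeasurableSet.iInter fun x => (measurable_pi_apply x) (measurableSet_singleton (v x))
  have h : S = ⋃ v ∈ S, {v} := by simp
  rw [h]
  exact MeasurableSet.biUnion (Set.to_countable S) (fun v _ => hsing v)

private def caF {l m n : ℕ} (hm : m + l = n) (a : ℕ) (ha : a ≤ m) :
    Fin l ⊕ Fin m → Fin n
  | Sum.inl j => ⟨a + (j : ℕ), by have := j.isLt; omega⟩
  | Sum.inr k => if _ : (k : ℕ) < a then ⟨(k : ℕ), by omega⟩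
      else ⟨(k : ℕ) + l, by have := k.isLt; omega⟩

private def caG {l m n : ℕ} (hm : m + l = n) (a : ℕ) (ha : a ≤ m) :
    Fin n → Fin l ⊕ Fin m := fun x =>
  if _ : (x : ℕ) < a then Sum.inr ⟨(x : ℕ), by omega⟩
  else if _ : (x : ℕ) < a + l then Sum.inl ⟨(x : ℕ) - a, by omega⟩
  else Sum.inr ⟨(x : ℕ) - l, by have := x.isLt; omega⟩

private lemma caF_inl {l m n : ℕ} (hm : m + l = n) (a : ℕ) (ha : a ≤ m) (j : Fin l) :
    caF hm a ha (Sum.inl j) = ⟨a + (j : ℕ), by have := j.isLt; omega⟩ := rfl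

private lemma caF_inr_lt {l m n : ℕ} (hm : m + l = n) (a : ℕ) (ha : a ≤ m) (k : Fin m)
    (h : (k : ℕ) < a) : caF hm a ha (Sum.inr k) = ⟨(k : ℕ), by omega⟩ := by
  show (if _ : (k : ℕ) < a then _ else _) = _
  rw [dif_pos h]

private lemma caF_inr_ge {l m n : ℕ} (hm : m + l = n) (a : ℕ) (ha : a ≤ m) (k : Fin m)
    (h : ¬ (k : ℕ) < a) :
    caF hm a ha (Sum.inr k) = ⟨(k : ℕ) + l, by have := k.isLt; omega⟩ := by
  show (if _ : (k : ℕ) < a then _ else _) = _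
  rw [dif_neg h]

private lemma caG_lt {l m n : ℕ} (hm : m + l = n) (a : ℕ) (ha : a ≤ m) (x : Fin n)
    (h : (x : ℕ) < a) : caG hm a ha x = Sum.inr ⟨(x : ℕ), by omega⟩ := by
  show (if _ : (x : ℕ) < a then _ else _) = _
  rw [dif_pos h]

private lemma caG_mid {l m n : ℕ} (hm : m + l = n) (a : ℕ) (ha : a ≤ m) (x : Fin n)
    (h1 : ¬ (x : ℕ) < a) (h2 : (x : ℕ) < a + l) :
    caG hm a ha x = Sum.inl ⟨(x : ℕ) - a, by omega⟩ := by
  show (if _ : (x : ℕ) < a then _ else _) = _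
  rw [dif_neg h1, dif_pos h2]

private lemma caG_hi {l m n : ℕ} (hm : m + l = n) (a : ℕ) (ha : a ≤ m) (x : Fin n)
    (h1 : ¬ (x : ℕ) < a) (h2 : ¬ (x : ℕ) < a + l) :
    caG hm a ha x = Sum.inr ⟨(x : ℕ) - l, by have := x.isLt; omega⟩ := by
  show (if _ : (x : ℕ) < a then _ else _) = _
  rw [dif_neg h1, dif_neg h2]

private def ca {l m n : ℕ} (hm : m + l = n) (a : ℕ) (ha : a ≤ m) :
    (Fin l ⊕ Fin m) ≃ Fin n where
  toFun := caF hm a ha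
  invFun := caG hm a ha
  left_inv s := by
    rcases s with j | k
    · have hj := j.isLt
      rw [caF_inl, caG_mid hm a ha _ (by exact (by omega : ¬ a + (j : ℕ) < a))
        (by exact (by omega : a + (j : ℕ) < a + l))]
      exact congrArg Sum.inl (Fin.ext (by exact (by omega : a + (j : ℕ) - a = (j : ℕ))))
    · have hk := k.isLt
      by_cases h : (k : ℕ) < a
      · rw [caF_inr_lt hm a ha k h, caG_lt hm a ha _ (by exact h)]
      · rw [caF_inr_ge hm a ha k h,
          caG_hi hm a ha _ (by exact (by omega : ¬ (k : ℕ) + l < a))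
            (by exact (by omega : ¬ (k : ℕ) + l < a + l))]
        exact congrArg Sum.inr (Fin.ext (by exact (by omega : (k : ℕ) + l - l = (k : ℕ))))
  right_inv x := by
    have hx := x.isLt
    by_cases h1 : (x : ℕ) < a
    · rw [caG_lt hm a ha x h1, caF_inr_lt hm a ha _ (by exact h1)]
    · by_cases h2 : (x : ℕ) < a + l
      · rw [caG_mid hm a ha x h1 h2, caF_inl]
        exact Fin.ext (by exact (by omega : a + ((x : ℕ) - a) = (x : ℕ)))
      · rw [caG_hi hm a ha x h1 h2, caF_inr_ge hm a ha _ (by exact (by omega : ¬ (x : ℕ) - l < a))]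
        exact Fin.ext (by exact (by omega : (x : ℕ) - l + l = (x : ℕ)))

private lemma ca_inl {l m n : ℕ} (hm : m + l = n) (a : ℕ) (ha : a ≤ m) (j : Fin l) :
    (ca hm a ha) (Sum.inl j) = ⟨a + (j : ℕ), by have := j.isLt; omega⟩ := rfl

private lemma ca_inr_lt {l m n : ℕ} (hm : m + l = n) (a : ℕ) (ha : a ≤ m) (k : Fin m)
    (hk : (k : ℕ) < a) : (ca hm a ha) (Sum.inr k) = ⟨(k : ℕ), by omega⟩ :=
  caF_inr_lt hm a ha k hk

private lemma ca_inr_ge {l m n : ℕ} (hm : m + l = n) (a : ℕ) (ha : a ≤ m) (k : Fin m)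
    (hk : ¬ (k : ℕ) < a) :
    (ca hm a ha) (Sum.inr k) = ⟨(k : ℕ) + l, by have := k.isLt; omega⟩ :=
  caF_inr_ge hm a ha k hk

private lemma key_measure {l m n : ℕ} (hl : 1 ≤ l) (hm : m + l = n) (a : ℕ) (ha : a ≤ m)
    (μ3 : Measure (Fin 3)) [IsProbabilityMeasure μ3] :
    Measure.pi (fun _ : Fin n => μ3) {v : Fin n → Fin 3 | Run n l (extF n v) a}
      = μ3 {1} ^ l * Measure.pi (fun _ : Fin m => μ3) {u : Fin m → Fin 3 | Good m (extF m u) a} := by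
  classical
  set e := ca hm a ha with he
  set Tmap : (Fin l → Fin 3) × (Fin m → Fin 3) → (Fin n → Fin 3) :=
    fun wu => (MeasurableEquiv.piCongrLeft (fun _ : Fin n => Fin 3) e)
      ((MeasurableEquiv.sumPiEquivProdPi (fun _ : Fin l ⊕ Fin m => Fin 3)).symm wu) with hT
  have hTmp : MeasurePreserving Tmap
      ((Measure.pi fun _ : Fin l => μ3).prod (Measure.pi fun _ : Fin m => μ3))
      (Measure.pi fun _ : Fin n => μ3) :=
    (measurePreserving_piCongrLeft (fun _ : Fin n => μ3) e).comp
      (measurePreserving_sumPiEquivProdPi_symm (fun _ : Fin l ⊕ Fin m => μ3))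
  have hcoord : ∀ (w : Fin l → Fin 3) (u : Fin m → Fin 3) (s : Fin l ⊕ Fin m),
      Tmap (w, u) (e s) = Sum.elim w u s := by
    intro w u s
    have hfm : Tmap (w, u) = (Equiv.piCongrLeft (fun _ : Fin n => Fin 3) e)
        ((Equiv.sumPiEquivProdPi (fun _ : Fin l ⊕ Fin m => Fin 3)).symm (w, u)) := rfl
    rw [hfm]
    rcases s with j | k
    · rw [Equiv.piCongrLeft_sumInl (fun _ : Fin n => Fin 3) e w u j]
      rfl
    · rw [Equiv.piCongrLeft_sumInr (fun _ : Fin n => Fin 3) e w u k]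
      rfl
  have hpre : Tmap ⁻¹' {v : Fin n → Fin 3 | Run n l (extF n v) a}
      = (Set.univ.pi fun _ : Fin l => ({1} : Set (Fin 3))) ×ˢ
        {u : Fin m → Fin 3 | Good m (extF m u) a} := by
    ext ⟨w, u⟩
    simp only [Set.mem_preimage, Set.mem_setOf_eq, Set.mem_prod, Set.mem_pi, Set.mem_univ,
      true_implies, Set.mem_singleton_iff]
    set v := Tmap (w, u) with hv
    have f1 : ∀ j : Fin l, extF n v (a + (j : ℕ)) = w j := by
      intro j
      have h := hcoord w u (Sum.inl j)
      rw [ca_inl] at h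
      have hlt : a + (j : ℕ) < n := by have := j.isLt; omega
      unfold extF
      rw [dif_pos hlt]
      exact h
    have f2 : ∀ b : ℕ, b < a → extF n v b = extF m u b := by
      intro b hb
      have hbm : b < m := by omega
      have hbn : b < n := by omega
      have h := hcoord w u (Sum.inr ⟨b, hbm⟩)
      rw [ca_inr_lt hm a ha ⟨b, hbm⟩ (by simpa using hb)] at h
      unfold extF
      rw [dif_pos hbn, dif_pos hbm]
      exact h
    have f3 : ∀ b : ℕ, a ≤ b → b < m → extF n v (b + l) = extF m u b := by
      intro b hab hbm
      have hbn : b + l < n := by omega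
      have h := hcoord w u (Sum.inr ⟨b, hbm⟩)
      rw [ca_inr_ge hm a ha ⟨b, hbm⟩ (by simp; omega)] at h
      unfold extF
      rw [dif_pos hbn, dif_pos hbm]
      exact h
    have hupc_eq : upc n (extF n v) a = upc m (extF m u) a := by
      unfold upc
      rw [show min a n = a by omega, show min a m = a by omega]
      congr 1
      apply Finset.filter_congr
      intro b hb
      rw [f2 b (Finset.mem_range.1 hb)]
    have hloc_eq : loc n (extF n v) (a + l) = loc m (extF m u) a := by
      unfold loc
      apply Finset.card_bij (fun (y : ℕ) _ => y - l)
      · intro y hy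
        simp only [Finset.mem_filter, Finset.mem_Ico] at hy ⊢
        obtain ⟨⟨hy1, hy2⟩, hy3⟩ := hy
        refine ⟨⟨by omega, by omega⟩, ?_⟩
        rw [← f3 (y - l) (by omega) (by omega), show y - l + l = y by omega]
        exact hy3
      · intro y hy z hz hyz
        simp only [Finset.mem_filter, Finset.mem_Ico] at hy hz
        omega
      · intro b hb
        simp only [Finset.mem_filter, Finset.mem_Ico] at hb ⊢
        obtain ⟨⟨hb1, hb2⟩, hb3⟩ := hb
        exact ⟨b + l, ⟨⟨by omega, by omega⟩, by rw [f3 b hb1 hb2]; exact hb3⟩, by omega⟩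
    have hprev_eq : ∀ hpos : 0 < a, extF n v (a - 1) = extF m u (a - 1) :=
      fun hpos => f2 (a - 1) (by omega)
    constructor
    · rintro ⟨hrun, hcount, hprev⟩
      refine ⟨fun j => ?_, ?_, ?_⟩
      · rw [← f1 j]
        exact hrun (j : ℕ) j.isLt
      · rw [← hupc_eq, ← hloc_eq]
        exact hcount
      · rcases hprev with h0 | hne
        · exact Or.inl h0
        · rcases Nat.eq_zero_or_pos a with h0 | hpos
          · exact Or.inl h0
          · right
            rw [← hprev_eq hpos]
            exact hne
    · rintro ⟨hw, hgood1, hgood2⟩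
      refine ⟨?_, ?_, ?_⟩
      · intro j hj
        have := f1 ⟨j, hj⟩
        simp only at this
        rw [this]
        exact hw ⟨j, hj⟩
      · rw [hupc_eq, hloc_eq]
        exact hgood1
      · rcases hgood2 with h0 | hne
        · exact Or.inl h0
        · rcases Nat.eq_zero_or_pos a with h0 | hpos
          · exact Or.inl h0
          · right
            rw [hprev_eq hpos]
            exact hne
  rw [← hTmp.measure_preimage (measurableSet_all _).nullMeasurableSet, hpre,
    Measure.prod_prod, Measure.pi_pi]
  congr 1
  rw [Finset.prod_const, Finset.card_univ, Fintype.card_fin]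

private lemma core_measure {n l : ℕ} (hl : l ≤ n) (μ3 : Measure (Fin 3))
    [IsProbabilityMeasure μ3] :
    Measure.pi (fun _ : Fin n => μ3) {v : Fin n → Fin 3 | l ≤ (fixF n (extF n v)).card}
      = μ3 {1} ^ l := by
  classical
  rcases Nat.eq_zero_or_pos l with rfl | hl1
  · have h : {v : Fin n → Fin 3 | 0 ≤ (fixF n (extF n v)).card} = Set.univ := by
      ext v; simp
    rw [h, pow_zero]
    exact measure_univ
  set m := n - l with hmdef
  have hm : m + l = n := by omega
  have hT : {v : Fin n → Fin 3 | l ≤ (fixF n (extF n v)).card}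
      = ⋃ a ∈ Finset.range (m + 1), {v : Fin n → Fin 3 | Run n l (extF n v) a} := by
    ext v
    simp only [Set.mem_setOf_eq, Set.mem_iUnion, Finset.mem_range, exists_prop]
    constructor
    · intro h
      obtain ⟨a, han, hr⟩ := run_of_card_le hl1 hl h
      exact ⟨a, by omega, hr⟩
    · rintro ⟨a, ham, hr⟩
      exact card_le_of_run hl1 (by omega) hr
  rw [hT, measure_biUnion_finset]
  · have hsum : ∀ a ∈ Finset.range (m + 1),
        Measure.pi (fun _ : Fin n => μ3) {v : Fin n → Fin 3 | Run n l (extF n v) a}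
          = μ3 {1} ^ l *
            Measure.pi (fun _ : Fin m => μ3) {u : Fin m → Fin 3 | Good m (extF m u) a} := by
      intro a ham
      exact key_measure hl1 hm a (by simp at ham; omega) μ3
    rw [Finset.sum_congr rfl hsum, ← Finset.mul_sum]
    have hpart : ∑ a ∈ Finset.range (m + 1),
        Measure.pi (fun _ : Fin m => μ3) {u : Fin m → Fin 3 | Good m (extF m u) a} = 1 := by
      rw [← measure_biUnion_finset]
      · have huniv : (⋃ a ∈ Finset.range (m + 1),
            {u : Fin m → Fin 3 | Good m (extF m u) a}) = Set.univ := by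
          ext u
          simp only [Set.mem_iUnion, Finset.mem_range, Set.mem_univ, iff_true, exists_prop,
            Set.mem_setOf_eq]
          obtain ⟨a, ham, hg⟩ := good_exists m (extF m u)
          exact ⟨a, by omega, hg⟩
        rw [huniv]
        exact measure_univ
      · intro a ha b hb hab
        apply Set.disjoint_left.2
        intro u hua hub
        simp only [Finset.coe_range, Set.mem_Iio] at ha hb
        exact hab (good_unique (by omega) (by omega) hua hub)
      · exact fun _ _ => measurableSet_all _
    rw [hpart, mul_one]
  · intro a ha b hb hab
    apply Set.disjoint_left.2
    intro v hva hvb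
    simp only [Finset.coe_range, Set.mem_Iio] at ha hb
    exact hab (run_unique hl1 (by omega) (by omega) hva hvb)
  · exact fun _ _ => measurableSet_all _
end MeasurePart

/-- let `G = (G_1, …, G_n)` be i.i.d. random variables with values in the
countable set `𝕀 ⊆ ℝ` and common distribution `μ`, with `p_i = μ {i}`. For `i ∈ 𝕀`, the number
`D_i` of fixed points `x` of `std(G)` with `G_x = i` has the distribution of `min(X, n)` with
`X ∼ Geo₀(1 - p_i)`: `D_i ≤ n` almost surely (here: surely) and `P(D_i ≥ l) = p_i ^ l` for every
`0 ≤ l ≤ n`. -/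
theorem stmt7 {Ω : Type*} [MeasurableSpace Ω] (P : Measure Ω) [IsProbabilityMeasure P]
    (𝕀 : Set ℝ) (h𝕀 : 𝕀.Countable)
    (μ : Measure ℝ) [IsProbabilityMeasure μ] (hμ : μ 𝕀ᶜ = 0)
    (n : ℕ) (G : Fin n → Ω → ℝ) (hmeas : ∀ x, Measurable (G x))
    (hindep : iIndepFun G P)
    (hdist : ∀ x, Measure.map (G x) P = μ)
    (std : (Fin n → ℝ) → Equiv.Perm (Fin n))
    (hstd : ∀ (g : Fin n → ℝ) (j k : Fin n),
      std g j < std g k ↔ (g j < g k ∨ (g j = g k ∧ j < k)))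
    (i : ℝ) (hi : i ∈ 𝕀) :
    (∀ ω : Ω,
      Set.ncard {x : Fin n | std (fun y => G y ω) x = x ∧ G x ω = i} ≤ n) ∧
    ∀ l : ℕ, l ≤ n →
      P {ω | l ≤ Set.ncard {x : Fin n | std (fun y => G y ω) x = x ∧ G x ω = i}} =
        μ {i} ^ l := by
  classical
  constructor
  · intro ω
    have h1 : {x : Fin n | std (fun y => G y ω) x = x ∧ G x ω = i} ⊆ Set.univ :=
      Set.subset_univ _
    have h2 := Set.ncard_le_ncard h1 Set.finite_univ
    simpa [Set.ncard_univ] using h2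
  · intro l hl
    set J : Ω → (Fin n → ℝ) := fun ω x => G x ω with hJdef
    have hJ : Measurable J := measurable_pi_lambda _ (fun x => hmeas x)
    have hmapJ : Measure.map J P = Measure.pi (fun _ : Fin n => μ) := by
      refine (Measure.pi_eq fun s hs => ?_).symm
      rw [Measure.map_apply hJ (MeasurableSet.univ_pi hs)]
      have hpre : J ⁻¹' Set.pi Set.univ s = ⋂ x, G x ⁻¹' s x := by
        ext ω
        simp [Set.mem_pi, hJdef]
      rw [hpre, hindep.meas_iInter (fun x => ⟨s x, hs x, rfl⟩)]
      exact Finset.prod_congr rfl fun x _ => by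
        rw [← hdist x, Measure.map_apply (hmeas x) (hs x)]
    set sg : (Fin n → ℝ) → (Fin n → Fin 3) := fun g y => sgn i (g y) with hsgdef
    have hsg : Measurable sg :=
      measurable_pi_lambda _ (fun y => (measurable_sgn i).comp (measurable_pi_apply y))
    set μ3 : Measure (Fin 3) := Measure.map (sgn i) μ with hμ3def
    have hμ3p : IsProbabilityMeasure μ3 :=
      Measure.isProbabilityMeasure_map (measurable_sgn i).aemeasurable
    have hμ3 : μ3 {1} = μ {i} := by
      rw [hμ3def, Measure.map_apply (measurable_sgn i) (measurableSet_singleton 1)]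
      congr 1
      ext r
      simp [Set.mem_preimage, sgn_eq_one_iff]
    have hmapsg : Measure.map sg (Measure.pi (fun _ : Fin n => μ))
        = Measure.pi (fun _ : Fin n => μ3) := by
      refine (Measure.pi_eq fun s hs => ?_).symm
      rw [Measure.map_apply hsg (MeasurableSet.univ_pi hs)]
      have hpre : sg ⁻¹' Set.pi Set.univ s = Set.pi Set.univ (fun y => sgn i ⁻¹' s y) := by
        ext g
        simp [Set.mem_pi, hsgdef]
      rw [hpre, Measure.pi_pi]
      refine Finset.prod_congr rfl fun y _ => ?_
      rw [hμ3def, Measure.map_apply (measurable_sgn i) (hs y)]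
    set Tset : Set (Fin n → Fin 3) := {v | l ≤ (fixF n (extF n v)).card} with hTsetdef
    have hsetω : {ω | l ≤ Set.ncard {x : Fin n | std (fun y => G y ω) x = x ∧ G x ω = i}}
        = J ⁻¹' (sg ⁻¹' Tset) := by
      ext ω
      simp only [Set.mem_setOf_eq, Set.mem_preimage, hTsetdef]
      rw [ncard_eq_fix std hstd (fun y => G y ω) i]
    rw [hsetω, ← Measure.map_apply hJ (hsg (measurableSet_all Tset)), hmapJ,
      ← Measure.map_apply hsg (measurableSet_all Tset), hmapsg, ← hμ3]
    exact core_measure hl μ3
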